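/- Let $H^{p-1}$ be an $R_{p-1}$-periodic $L^2$ function, $h_p$ a $C^1$ function of period 1 with $\|h_p'\|_\infty \le K_1$ and unit variance, $\gamma_p > 0$, and $R_p = r_p R_{p-1}$ with $r_p$ a positive integer. Set $H^p(x) = H^{p-1}(x) + \gamma_p h_p(x/R_p)$. Then $\big|\mathrm{Var}(H^p) - \mathrm{Var}(H^{p-1}) - \gamma_p^2\big| \le 2\gamma_p K_1 r_p^{-1}\sqrt{\mathrm{Var}(H^{p-1})}$, where variances are taken over one period of the respective functions. -/

import Mathlib

open MeasureTheory intervalIntegral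


/-- A periodic function integrable on one period is integrable on every interval. -/
lemma periodic_intervalIntegrable' {f : ℝ → ℝ} {T : ℝ} (hf : Function.Periodic f T)
    (hT : 0 < T) (hint : IntervalIntegrable f volume 0 T) :
    ∀ a b : ℝ, IntervalIntegrable f volume a b := by
  have block : ∀ n : ℤ, IntervalIntegrable f volume (n * T) (n * T + T) := by
    intro n
    have h1 := hint.comp_add_right (-(n * T))
    have h2 : (fun x => f (x + -(n * T))) = f := by
      funext x
      have := (hf.zsmul (-n)) x
      simpa [zsmul_eq_mul, neg_mul] using this
    rw [h2] at h1
    have : IntervalIntegrable f volume (n * T) (T + n * T) := by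
      simpa [zero_sub, sub_neg_eq_add] using h1
    simpa [add_comm] using this
  have chain : ∀ (n : ℤ) (m : ℕ), IntervalIntegrable f volume (n * T) ((n + m) * T) := by
    intro n m
    induction m with
    | zero => simp
    | succ k ih =>
      have hb := block (n + k)
      refine ih.trans ?_
      have e1 : ((n : ℝ) + (k : ℝ)) * T = ((n + k : ℤ) : ℝ) * T := by push_cast; ring
      have e2 : ((n : ℝ) + ((k : ℕ) + 1 : ℕ)) * T = ((n + k : ℤ) : ℝ) * T + T := by
        push_cast; ring
      rw [e1, e2]
      exact hb
  intro a b
  wlog hab : a ≤ b generalizing a b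
  · exact (this b a (le_of_not_ge hab)).symm
  set n₁ : ℤ := ⌊a / T⌋ with hn₁
  set n₂ : ℤ := ⌈b / T⌉ with hn₂
  have h₁ : (n₁ : ℝ) * T ≤ a := by
    have := Int.floor_le (a / T)
    calc (n₁ : ℝ) * T ≤ (a / T) * T := by nlinarith
      _ = a := by field_simp
  have h₂ : b ≤ (n₂ : ℝ) * T := by
    have := Int.le_ceil (b / T)
    calc b = (b / T) * T := by field_simp
      _ ≤ (n₂ : ℝ) * T := by nlinarith
  have hn : n₁ ≤ n₂ := by
    have h3 : (n₁ : ℝ) * T ≤ (n₂ : ℝ) * T := le_trans h₁ (le_trans hab h₂)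
    have h4 : (n₁ : ℝ) ≤ (n₂ : ℝ) := le_of_mul_le_mul_right (by linarith [h3]) hT
    exact_mod_cast h4
  have key := chain n₁ (n₂ - n₁).toNat
  have e3 : ((n₁ : ℝ) + ((n₂ - n₁).toNat : ℕ)) * T = (n₂ : ℝ) * T := by
    have : (((n₂ - n₁).toNat : ℤ) : ℝ) = (n₂ : ℝ) - n₁ := by
      norm_cast; omega
    push_cast at this ⊢
    rw [this]; ring
  rw [e3] at key
  exact key.mono_set (by
    rw [Set.uIcc_of_le hab, Set.uIcc_of_le (le_trans h₁ (le_trans hab h₂))]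
    exact Set.Icc_subset_Icc h₁ h₂)


lemma mixing_bound' {f g : ℝ → ℝ} {T L : ℝ} (r : ℕ) (hT : 0 < T) (hL : 0 ≤ L)
    (hfint : ∀ a b : ℝ, IntervalIntegrable f volume a b)
    (hfper : Function.Periodic f T) (hf0 : ∫ x in (0:ℝ)..T, f x = 0)
    (hg : ∀ x y : ℝ, |g x - g y| ≤ L * |x - y|) (hgc : Continuous g) :
    |∫ x in (0:ℝ)..(r * T), f x * g x| ≤ L * T * ∫ x in (0:ℝ)..(r * T), |f x| := by
  set a : ℕ → ℝ := fun k => k * T with ha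
  have hfg : ∀ a b : ℝ, IntervalIntegrable (fun x => f x * g x) volume a b := by
    intro a b
    exact (hfint a b).mul_continuousOn hgc.continuousOn
  have habs : ∀ a b : ℝ, IntervalIntegrable (fun x => |f x|) volume a b :=
    fun a b => (hfint a b).abs
  have hsplit : (∫ x in (0:ℝ)..(r * T), f x * g x)
      = ∑ k ∈ Finset.range r, ∫ x in a k..a (k+1), f x * g x := by
    have := sum_integral_adjacent_intervals (a := a) (n := r)
      (fun k _ => hfg (a k) (a (k+1)))
    simp only [ha] at this ⊢
    simp only [Nat.cast_zero, zero_mul] at this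
    exact this.symm
  have hsplitabs : (∫ x in (0:ℝ)..(r * T), |f x|)
      = ∑ k ∈ Finset.range r, ∫ x in a k..a (k+1), |f x| := by
    have := sum_integral_adjacent_intervals (a := a) (n := r)
      (fun k _ => habs (a k) (a (k+1)))
    simp only [ha] at this ⊢
    simp only [Nat.cast_zero, zero_mul] at this
    exact this.symm
  rw [hsplit, hsplitabs, Finset.mul_sum]
  refine le_trans (Finset.abs_sum_le_sum_abs _ _) (Finset.sum_le_sum ?_)
  intro k _
  -- per-block bound
  have hle : a k ≤ a (k + 1) := by
    simp only [ha]; push_cast; nlinarith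
  have hblock0 : (∫ x in a k..a (k+1), f x) = 0 := by
    have := hfper.intervalIntegral_add_eq (a k) 0
    have e : a (k+1) = a k + T := by simp only [ha]; push_cast; ring
    rw [e, this]; simpa using hf0
  have heq : (∫ x in a k..a (k+1), f x * g x)
      = ∫ x in a k..a (k+1), f x * (g x - g (a k)) := by
    have : (∫ x in a k..a (k+1), f x * (g x - g (a k)))
        = (∫ x in a k..a (k+1), f x * g x) - (∫ x in a k..a (k+1), f x * g (a k)) := by
      rw [← integral_sub (hfg _ _) ((hfint _ _).mul_const _)]
      congr 1; funext x; ring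
    rw [this, intervalIntegral.integral_mul_const, hblock0]; ring
  rw [heq]
  calc |∫ x in a k..a (k+1), f x * (g x - g (a k))|
      ≤ ∫ x in a k..a (k+1), |f x * (g x - g (a k))| :=
        abs_integral_le_integral_abs hle
    _ ≤ ∫ x in a k..a (k+1), L * T * |f x| := by
        apply integral_mono_on hle
        · exact ((hfint _ _).mul_continuousOn (by fun_prop)).abs
        · exact (habs _ _).const_mul _
        · intro x hx
          rw [abs_mul]
          have h1 : |g x - g (a k)| ≤ L * T := by
            refine le_trans (hg x (a k)) ?_
            have : |x - a k| ≤ T := by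
              rw [abs_le]
              constructor
              · have := hx.1; linarith
              · have h2 := hx.2
                have e : a (k+1) = a k + T := by simp only [ha]; push_cast; ring
                rw [e] at h2; linarith
            nlinarith
          calc |f x| * |g x - g (a k)| ≤ |f x| * (L * T) := by
                exact mul_le_mul_of_nonneg_left h1 (abs_nonneg _)
            _ = L * T * |f x| := by ring
    _ = L * T * ∫ x in a k..a (k+1), |f x| := integral_const_mul _ _


lemma cs_bound' {F : ℝ → ℝ} {T : ℝ} (hT : 0 < T)
    (h1 : IntervalIntegrable F volume 0 T)
    (h2 : IntervalIntegrable (fun x => F x ^ 2) volume 0 T) :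
    (1 / T) * ∫ x in (0:ℝ)..T, |F x| ≤ Real.sqrt ((1 / T) * ∫ x in (0:ℝ)..T, F x ^ 2) := by
  set m : ℝ := (1 / T) * ∫ x in (0:ℝ)..T, |F x| with hm
  have hm0 : 0 ≤ m := by
    apply mul_nonneg (by positivity)
    exact integral_nonneg hT.le (fun x _ => abs_nonneg _)
  have habs : IntervalIntegrable (fun x => |F x|) volume 0 T := h1.abs
  have key : 0 ≤ (∫ x in (0:ℝ)..T, F x ^ 2) - m ^ 2 * T := by
    have expand : (∫ x in (0:ℝ)..T, (|F x| - m) ^ 2)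
        = (∫ x in (0:ℝ)..T, F x ^ 2) - m ^ 2 * T := by
      have e : ∀ x : ℝ, (|F x| - m) ^ 2 = F x ^ 2 - (2 * m) * |F x| + m ^ 2 := by
        intro x
        have : |F x| ^ 2 = F x ^ 2 := sq_abs _
        nlinarith [sq_abs (F x)]
      simp only [e]
      rw [integral_add (h2.sub ((habs.const_mul _))) intervalIntegrable_const,
        integral_sub h2 (habs.const_mul _), intervalIntegral.integral_const_mul, intervalIntegral.integral_const]
      have : (∫ x in (0:ℝ)..T, |F x|) = m * T := by
        rw [hm]; field_simp
      rw [this]; simp; ring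
    have pos : 0 ≤ ∫ x in (0:ℝ)..T, (|F x| - m) ^ 2 :=
      integral_nonneg hT.le (fun x _ => sq_nonneg _)
    linarith [expand ▸ pos]
  have hmsq : m ^ 2 ≤ (1 / T) * ∫ x in (0:ℝ)..T, F x ^ 2 := by
    rw [div_mul_eq_mul_div, le_div_iff₀ hT]
    linarith
  calc m = Real.sqrt (m ^ 2) := (Real.sqrt_sq hm0).symm
    _ ≤ _ := Real.sqrt_le_sqrt hmsq


lemma per_int_mul' {f : ℝ → ℝ} {T : ℝ} (hf : Function.Periodic f T) (r : ℕ)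
    (hint : ∀ a b : ℝ, IntervalIntegrable f volume a b) :
    ∫ x in (0:ℝ)..(r * T), f x = r * ∫ x in (0:ℝ)..T, f x := by
  have := hf.intervalIntegral_add_zsmul_eq (r : ℤ) 0 hint
  simpa [zsmul_eq_mul] using this


/-- Variance of a periodic function over one period `[0, R]`. -/
noncomputable def perVar (R : ℝ) (f : ℝ → ℝ) : ℝ :=
  (1 / R) * ∫ x in (0:ℝ)..R, (f x - (1 / R) * ∫ y in (0:ℝ)..R, f y) ^ 2

/-- Variance recursion: `|Var(Hᵖ) - Var(Hᵖ⁻¹) - γₚ²| ≤ 2 γₚ K₁ rₚ⁻¹ √Var(Hᵖ⁻¹)` for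
`Hᵖ = Hᵖ⁻¹ + γₚ hₚ(·/Rₚ)`, `Rₚ = rₚ R_{p-1}`. -/
theorem var_recursion_step (H h : ℝ → ℝ) (Rprev γp K₁ : ℝ) (r : ℕ)
    (hRprev : 0 < Rprev) (hr : 0 < r) (hγp : 0 < γp)
    (hHper : Function.Periodic H Rprev) (hHmeas : Measurable H)
    (hHint : IntervalIntegrable H volume 0 Rprev)
    (hHsq : IntervalIntegrable (fun x => H x ^ 2) volume 0 Rprev)
    (hhC1 : ContDiff ℝ 1 h) (hhper : Function.Periodic h 1)
    (hhvar : perVar 1 h = 1) (hK₁ : ∀ x, |deriv h x| ≤ K₁) :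
    |perVar (r * Rprev) (fun x => H x + γp * h (x / (r * Rprev)))
        - perVar Rprev H - γp ^ 2|
      ≤ 2 * γp * K₁ * (r : ℝ)⁻¹ * Real.sqrt (perVar Rprev H) := by
  have hrR : (0:ℝ) < (r : ℝ) := by exact_mod_cast hr
  set R : ℝ := (r : ℝ) * Rprev with hRdef
  have hR : 0 < R := mul_pos hrR hRprev
  have hRne : R ≠ 0 := hR.ne'
  set m : ℝ := (1 / Rprev) * ∫ y in (0:ℝ)..Rprev, H y with hmdef
  set mh : ℝ := ∫ t in (0:ℝ)..1, h t with hmhdef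
  have hK₁0 : 0 ≤ K₁ := le_trans (abs_nonneg _) (hK₁ 0)
  have hhc : Continuous h := hhC1.continuous
  -- Lipschitz bound for h
  have hlip : ∀ x y : ℝ, |h x - h y| ≤ K₁ * |x - y| := by
    intro x y
    have := Convex.norm_image_sub_le_of_norm_deriv_le
      (fun z _ => (hhC1.differentiable one_ne_zero).differentiableAt)
      (fun z _ => by rw [Real.norm_eq_abs]; exact hK₁ z) convex_univ
      (Set.mem_univ y) (Set.mem_univ x)
    simpa [Real.norm_eq_abs] using this
  -- centered functions
  set H₀ : ℝ → ℝ := fun x => H x - m with hH₀def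
  set g : ℝ → ℝ := fun x => h (x / R) - mh with hgdef
  have hH₀per : Function.Periodic H₀ Rprev := fun x => by simp [hH₀def, hHper x]
  have hH₀int : IntervalIntegrable H₀ volume 0 Rprev := hHint.sub intervalIntegrable_const
  have hH₀all : ∀ a b : ℝ, IntervalIntegrable H₀ volume a b :=
    periodic_intervalIntegrable' hH₀per hRprev hH₀int
  have hH₀sqeq : (fun x => H₀ x ^ 2) = fun x => H x ^ 2 - (2 * m) * H x + m ^ 2 := by
    funext x; simp only [hH₀def]; ring
  have hH₀sqint : IntervalIntegrable (fun x => H₀ x ^ 2) volume 0 Rprev := by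
    rw [hH₀sqeq]
    exact (hHsq.sub (hHint.const_mul _)).add intervalIntegrable_const
  have hH₀sqper : Function.Periodic (fun x => H₀ x ^ 2) Rprev := fun x => by
    simp [hH₀per x]
  have hH₀sqall : ∀ a b : ℝ, IntervalIntegrable (fun x => H₀ x ^ 2) volume a b :=
    periodic_intervalIntegrable' hH₀sqper hRprev hH₀sqint
  have hgc : Continuous g := (hhc.comp (continuous_id.div_const R)).sub continuous_const
  -- centered integrals vanish
  have hH₀zero : ∫ x in (0:ℝ)..Rprev, H₀ x = 0 := by
    simp only [hH₀def]
    rw [integral_sub hHint intervalIntegrable_const, intervalIntegral.integral_const]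
    simp only [hmdef, smul_eq_mul, sub_zero]
    field_simp
    simp
  -- variance of h₀ over [0,1]
  have hh0sq : ∫ t in (0:ℝ)..1, (h t - mh) ^ 2 = 1 := by
    have := hhvar
    unfold perVar at this
    simpa [hmhdef] using this
  -- perVar Rprev H as centered second moment
  have hVdef : perVar Rprev H = (1 / Rprev) * ∫ x in (0:ℝ)..Rprev, H₀ x ^ 2 := by
    unfold perVar
    rfl
  have hV0 : 0 ≤ perVar Rprev H := by
    rw [hVdef]
    exact mul_nonneg (by positivity) (integral_nonneg hRprev.le (fun x _ => sq_nonneg _))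
  -- scaling of integrals of compositions x ↦ φ(x/R)
  have hscale : ∀ φ : ℝ → ℝ, Continuous φ →
      ∫ x in (0:ℝ)..R, φ (x / R) = R * ∫ t in (0:ℝ)..1, φ t := by
    intro φ hφ
    rw [intervalIntegral.integral_comp_div (f := φ) hRne]
    rw [zero_div, div_self hRne]
    simp
  -- mean of the new function
  have hmean : (1 / R) * ∫ y in (0:ℝ)..R, (H y + γp * h (y / R)) = m + γp * mh := by
    have h1 : ∫ y in (0:ℝ)..R, H y = (r : ℝ) * ∫ y in (0:ℝ)..Rprev, H y :=
      per_int_mul' hHper r (periodic_intervalIntegrable' hHper hRprev hHint)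
    have h2 : ∫ y in (0:ℝ)..R, γp * h (y / R) = γp * (R * mh) := by
      rw [intervalIntegral.integral_const_mul, hscale h hhc, hmhdef]
    have h3 : ∫ y in (0:ℝ)..R, (H y + γp * h (y / R))
        = ((r : ℝ) * ∫ y in (0:ℝ)..Rprev, H y) + γp * (R * mh) := by
      rw [intervalIntegral.integral_add (periodic_intervalIntegrable' hHper hRprev hHint 0 R)
        (((by fun_prop : Continuous fun y : ℝ => γp * h (y / R))).intervalIntegrable 0 R),
        h1, h2]
    rw [h3]
    have : (r : ℝ) * ∫ y in (0:ℝ)..Rprev, H y = R * m := by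
      rw [hmdef, hRdef]; field_simp
    rw [this]
    field_simp
  -- expand the variance
  set C : ℝ := ∫ x in (0:ℝ)..R, H₀ x * g x with hCdef
  have hexp : perVar R (fun x => H x + γp * h (x / R))
      = perVar Rprev H + γp ^ 2 + 2 * γp * ((1/R) * C) := by
    unfold perVar
    rw [hmean]
    have e : ∀ x : ℝ, (H x + γp * h (x / R) - (m + γp * mh)) ^ 2
        = H₀ x ^ 2 + ((γp ^ 2) * (h (x/R) - mh) ^ 2 + (2 * γp) * (H₀ x * g x)) := by
      intro x; simp only [hH₀def, hgdef]; ring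
    simp only [e]
    have i1 : IntervalIntegrable (fun x => H₀ x ^ 2) volume 0 R := hH₀sqall 0 R
    have i2 : IntervalIntegrable (fun x => (γp ^ 2) * (h (x/R) - mh) ^ 2) volume 0 R :=
      ((by fun_prop : Continuous fun x : ℝ => (γp ^ 2) * (h (x/R) - mh) ^ 2)).intervalIntegrable 0 R
    have i3 : IntervalIntegrable (fun x => (2 * γp) * (H₀ x * g x)) volume 0 R :=
      (((hH₀all 0 R).mul_continuousOn hgc.continuousOn).const_mul _)
    rw [intervalIntegral.integral_add i1 (i2.add i3), intervalIntegral.integral_add i2 i3,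
      intervalIntegral.integral_const_mul, intervalIntegral.integral_const_mul]
    have j1 : ∫ x in (0:ℝ)..R, H₀ x ^ 2 = (r : ℝ) * ∫ x in (0:ℝ)..Rprev, H₀ x ^ 2 :=
      per_int_mul' hH₀sqper r hH₀sqall
    have j2 : ∫ x in (0:ℝ)..R, (h (x/R) - mh) ^ 2 = R * 1 := by
      rw [← hh0sq, hscale (fun t => (h t - mh) ^ 2) ((hhc.sub continuous_const).pow 2)]
    rw [j1, j2, ← hCdef]
    simp only [hH₀def]
    rw [← hmdef]
    rw [hRdef]
    field_simp
    ring
  rw [hexp]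
  have hsimp : perVar Rprev H + γp ^ 2 + 2 * γp * ((1/R) * C) - perVar Rprev H - γp ^ 2
      = 2 * γp * ((1/R) * C) := by ring
  rw [hsimp, abs_mul, abs_of_pos (by linarith : (0:ℝ) < 2 * γp), abs_mul,
    abs_of_pos (by positivity : (0:ℝ) < 1/R)]
  -- mixing bound
  have hgL : ∀ x y : ℝ, |g x - g y| ≤ (K₁ / R) * |x - y| := by
    intro x y
    have : g x - g y = h (x / R) - h (y / R) := by simp [hgdef]
    rw [this]
    refine le_trans (hlip _ _) ?_
    rw [show x / R - y / R = (x - y) / R by ring, abs_div, abs_of_pos hR]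
    rw [div_mul_eq_mul_div, mul_div_assoc]
  have hmix := mixing_bound' (f := H₀) (g := g) (T := Rprev) (L := K₁ / R) r hRprev
    (by positivity) hH₀all hH₀per hH₀zero hgL hgc
  have habsper : Function.Periodic (fun x => |H₀ x|) Rprev := fun x => by simp [hH₀per x]
  have habsint : ∫ x in (0:ℝ)..(R), |H₀ x| = (r:ℝ) * ∫ x in (0:ℝ)..Rprev, |H₀ x| := by
    rw [hRdef]
    exact per_int_mul' habsper r (fun a b => (hH₀all a b).abs)
  have hcs : (1 / Rprev) * ∫ x in (0:ℝ)..Rprev, |H₀ x| ≤ Real.sqrt (perVar Rprev H) := by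
    rw [hVdef]
    exact cs_bound' hRprev hH₀int hH₀sqint
  have habsnn : 0 ≤ ∫ x in (0:ℝ)..Rprev, |H₀ x| :=
    integral_nonneg hRprev.le (fun x _ => abs_nonneg _)
  -- combine
  have hCbound : |C| ≤ K₁ * Rprev * Real.sqrt (perVar Rprev H) := by
    have h1 : |C| ≤ (K₁ / R) * Rprev * ((r:ℝ) * ∫ x in (0:ℝ)..Rprev, |H₀ x|) := by
      rw [hCdef]
      calc |∫ x in (0:ℝ)..R, H₀ x * g x|
          = |∫ x in (0:ℝ)..((r:ℕ) * Rprev), H₀ x * g x| := by rw [hRdef]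
        _ ≤ (K₁ / R) * Rprev * ∫ x in (0:ℝ)..((r:ℕ) * Rprev), |H₀ x| := hmix
        _ = (K₁ / R) * Rprev * ((r:ℝ) * ∫ x in (0:ℝ)..Rprev, |H₀ x|) := by
            rw [← habsint]
    have h2 : (K₁ / R) * Rprev * ((r:ℝ) * ∫ x in (0:ℝ)..Rprev, |H₀ x|)
        = K₁ * Rprev * ((1/Rprev) * ∫ x in (0:ℝ)..Rprev, |H₀ x|) := by
      rw [hRdef]; field_simp
    rw [h2] at h1
    refine le_trans h1 ?_
    exact mul_le_mul_of_nonneg_left hcs (by positivity)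
  calc 2 * γp * (1 / R * |C|)
      ≤ 2 * γp * (1 / R * (K₁ * Rprev * Real.sqrt (perVar Rprev H))) := by
        apply mul_le_mul_of_nonneg_left _ (by linarith)
        exact mul_le_mul_of_nonneg_left hCbound (by positivity)
    _ = 2 * γp * K₁ * (r : ℝ)⁻¹ * Real.sqrt (perVar Rprev H) := by
        rw [hRdef]; field_simp
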